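/- Let h > 0 and δ ≥ 2h. Let λ : ℝ² × ℝ × ℝ → ℝ, written λ(ξ₁,ξ₂,z′,z), be bounded and measurable with the symmetries λ(ξ₁,ξ₂,z′,z) = λ(ξ₁,ξ₂,−z′,−z) = λ(ξ₁,ξ₂,z,z′) for all arguments, and with λ(ξ₁,ξ₂,z′,z) = 0 whenever |z| > h, or |z′| > h, or ξ₁² + ξ₂² + (z′−z)² ≥ δ². Let ρ : ℝ² → ℝ and let b : ℝ³ × ℝ → ℝ³ satisfy b₃ ≡ 0 and b(x,y,−z,t) = b(x,y,z,t). Suppose u : ℝ³ × ℝ → ℝ³ is bounded, continuous, twice differentiable in t, and satisfies the bond-based linear peridynamic equation of motion ρ(x,y) ∂ₜ²u_i(x,y,z,t) = ∫_{ℝ³} λ(x′−x, y′−y, z′, z) (x′_i − x_i) Σ_j (x′_j − x_j)(u_j(x′,y′,z′,t) − u_j(x,y,z,t)) dx′dy′dz′ + b_i(x,y,z,t) for all i ∈ {1,2,3} and all (x,y,z,t) (where (x₁,x₂,x₃) = (x,y,z)). Then the mirrored field v defined by v₁(x,y,z,t) = u₁(x,y,−z,t), v₂(x,y,z,t) = u₂(x,y,−z,t),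 v₃(x,y,z,t) = −u₃(x,y,−z,t) also satisfies the same equation of motion. -/

import Mathlib

open MeasureTheory

/-- The bond-based linear peridynamic equation of motion for a thin plate with a
position-aware micromodulus `λ(ξ₁, ξ₂, z′, z)`, mass density `ρ(x,y)` and body
force density `b`. -/
noncomputable def PeriEOM (lam : ℝ → ℝ → ℝ → ℝ → ℝ) (ρ : ℝ → ℝ → ℝ)
    (b : ℝ → ℝ → ℝ → ℝ → Fin 3 → ℝ) (u : ℝ → ℝ → ℝ → ℝ → Fin 3 → ℝ) : Prop :=
  ∀ (x y z t : ℝ) (i : Fin 3),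
    ρ x y * deriv (fun s => deriv (fun s' => u x y z s' i) s) t =
      (∫ p : ℝ × ℝ × ℝ,
        lam (p.1 - x) (p.2.1 - y) p.2.2 z *
          (![p.1 - x, p.2.1 - y, p.2.2 - z] i) *
          (∑ j, (![p.1 - x, p.2.1 - y, p.2.2 - z] j) *
            (u p.1 p.2.1 p.2.2 t j - u x y z t j))) + b x y z t i

/-- for a thin plate with monoclinic symmetry relative to the
plane `z = 0`, mirroring a solution of the bond-based linear peridynamic
equation of motion through `z = 0` (flipping the third displacement component)
again yields a solution. -/
theorem statement15 (h δ : ℝ) (hh : 0 < h) (hδ : 2*h ≤ δ)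
    (lam : ℝ → ℝ → ℝ → ℝ → ℝ)
    (hbdd : ∃ M, ∀ ξ₁ ξ₂ z' z, |lam ξ₁ ξ₂ z' z| ≤ M)
    (hmeas : Measurable fun p : ℝ × ℝ × ℝ × ℝ => lam p.1 p.2.1 p.2.2.1 p.2.2.2)
    (hsym1 : ∀ ξ₁ ξ₂ z' z, lam ξ₁ ξ₂ z' z = lam ξ₁ ξ₂ (-z') (-z))
    (hsym2 : ∀ ξ₁ ξ₂ z' z, lam ξ₁ ξ₂ z' z = lam ξ₁ ξ₂ z z')
    (hvanish : ∀ ξ₁ ξ₂ z' z, (h < |z| ∨ h < |z'| ∨ δ^2 ≤ ξ₁^2 + ξ₂^2 + (z'-z)^2) →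
      lam ξ₁ ξ₂ z' z = 0)
    (ρ : ℝ → ℝ → ℝ)
    (b : ℝ → ℝ → ℝ → ℝ → Fin 3 → ℝ)
    (hb3 : ∀ x y z t, b x y z t 2 = 0)
    (hbsym : ∀ x y z t, b x y (-z) t = b x y z t)
    (u : ℝ → ℝ → ℝ → ℝ → Fin 3 → ℝ)
    (hubdd : ∃ M, ∀ x y z t i, |u x y z t i| ≤ M)
    (hucont : Continuous fun p : ℝ × ℝ × ℝ × ℝ =>
      (fun i => u p.1 p.2.1 p.2.2.1 p.2.2.2 i : Fin 3 → ℝ))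
    (hut : ∀ x y z t i, DifferentiableAt ℝ (fun s => u x y z s i) t ∧
      DifferentiableAt ℝ (deriv fun s => u x y z s i) t)
    (hEOM : PeriEOM lam ρ b u) :
    PeriEOM lam ρ b
      (fun x y z t => ![u x y (-z) t 0, u x y (-z) t 1, -(u x y (-z) t 2)]) := by
  have hmp : MeasurePreserving (fun p : ℝ × ℝ × ℝ => (p.1, p.2.1, -p.2.2))
      (volume : Measure (ℝ×ℝ×ℝ)) volume :=
    (MeasurePreserving.id volume).prod
      ((MeasurePreserving.id volume).prod (Measure.measurePreserving_neg volume))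
  have hemb : MeasurableEmbedding (fun p : ℝ × ℝ × ℝ => (p.1, p.2.1, -p.2.2)) := by
    have he : (fun p : ℝ × ℝ × ℝ => (p.1, p.2.1, -p.2.2)) =
      ⇑((MeasurableEquiv.refl ℝ).prodCongr ((MeasurableEquiv.refl ℝ).prodCongr (MeasurableEquiv.neg ℝ))) := rfl
    rw [he]; exact MeasurableEquiv.measurableEmbedding _
  have hint : ∀ f : ℝ×ℝ×ℝ → ℝ, (∫ p : ℝ×ℝ×ℝ, f (p.1, p.2.1, -p.2.2)) = ∫ p, f p :=
    fun f => hmp.integral_comp hemb f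
  intro x y z t i
  have hE := hEOM x y (-z) t i
  fin_cases i
  · simp only [Fin.mk_zero, Fin.isValue, Matrix.cons_val_zero, Fin.sum_univ_three,
      Matrix.cons_val_one, Matrix.head_cons, Matrix.cons_val_two, Matrix.tail_cons] at hE ⊢
    rw [hE, hbsym x y z t]
    congr 1
    rw [← hint (fun p : ℝ×ℝ×ℝ => lam (p.1 - x) (p.2.1 - y) p.2.2 (-z) * (p.1 - x) *
      ((p.1 - x) * (u p.1 p.2.1 p.2.2 t 0 - u x y (-z) t 0) +
        (p.2.1 - y) * (u p.1 p.2.1 p.2.2 t 1 - u x y (-z) t 1) +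
        (p.2.2 - -z) * (u p.1 p.2.1 p.2.2 t 2 - u x y (-z) t 2)))]
    congr 1; funext p
    simp only
    rw [hsym1 (p.1 - x) (p.2.1 - y) p.2.2 z]
    ring
  · simp only [Fin.mk_one, Fin.isValue, Matrix.cons_val_zero, Fin.sum_univ_three,
      Matrix.cons_val_one, Matrix.head_cons, Matrix.cons_val_two, Matrix.tail_cons] at hE ⊢
    rw [hE, hbsym x y z t]
    congr 1
    rw [← hint (fun p : ℝ×ℝ×ℝ => lam (p.1 - x) (p.2.1 - y) p.2.2 (-z) * (p.2.1 - y) *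
      ((p.1 - x) * (u p.1 p.2.1 p.2.2 t 0 - u x y (-z) t 0) +
        (p.2.1 - y) * (u p.1 p.2.1 p.2.2 t 1 - u x y (-z) t 1) +
        (p.2.2 - -z) * (u p.1 p.2.1 p.2.2 t 2 - u x y (-z) t 2)))]
    congr 1; funext p
    simp only
    rw [hsym1 (p.1 - x) (p.2.1 - y) p.2.2 z]
    ring
  · simp only [Fin.reduceFinMk, Fin.isValue, Matrix.cons_val_zero, Fin.sum_univ_three,
      Matrix.cons_val_one, Matrix.head_cons, Matrix.cons_val_two, Matrix.tail_cons,
      deriv.fun_neg, hb3, add_zero] at hE ⊢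
    have h2 : (∫ p : ℝ×ℝ×ℝ, lam (p.1 - x) (p.2.1 - y) p.2.2 z * (p.2.2 - z) *
        ((p.1 - x) * (u p.1 p.2.1 (-p.2.2) t 0 - u x y (-z) t 0) +
          (p.2.1 - y) * (u p.1 p.2.1 (-p.2.2) t 1 - u x y (-z) t 1) +
          (p.2.2 - z) * (-u p.1 p.2.1 (-p.2.2) t 2 - -u x y (-z) t 2))) =
        ∫ p : ℝ×ℝ×ℝ, -(lam (p.1 - x) (p.2.1 - y) p.2.2 (-z) * (p.2.2 - -z) *
        ((p.1 - x) * (u p.1 p.2.1 p.2.2 t 0 - u x y (-z) t 0) +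
          (p.2.1 - y) * (u p.1 p.2.1 p.2.2 t 1 - u x y (-z) t 1) +
          (p.2.2 - -z) * (u p.1 p.2.1 p.2.2 t 2 - u x y (-z) t 2))) := by
      rw [← hint (fun p : ℝ×ℝ×ℝ => -(lam (p.1 - x) (p.2.1 - y) p.2.2 (-z) * (p.2.2 - -z) *
        ((p.1 - x) * (u p.1 p.2.1 p.2.2 t 0 - u x y (-z) t 0) +
          (p.2.1 - y) * (u p.1 p.2.1 p.2.2 t 1 - u x y (-z) t 1) +
          (p.2.2 - -z) * (u p.1 p.2.1 p.2.2 t 2 - u x y (-z) t 2))))]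
      congr 1; funext p
      simp only
      rw [hsym1 (p.1 - x) (p.2.1 - y) p.2.2 z]
      ring
    rw [h2, integral_neg, ← hE]
    ring
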